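/- Let (a_m)_{m≥1} ∈ {0,…,B−1}^ℕ and let h_k be GLS maps as above. Setting s_m = ε_{a_m}, K_m = 1/(r_{a_m+1} − r_{a_m}), and t_m = r_{a_m} + ε_{a_m}, the limit x = lim_{m→∞} h_{a_1} ∘ ⋯ ∘ h_{a_m}(0) satisfies x = ∑_{m≥1} (−1)^{∑_{i=1}^{m−1} s_i} · t_m / ∏_{i=1}^{m−1} K_i (with empty sum 0 and empty product 1). -/

import Mathlib

set_option maxRecDepth 8000


/-- For a digit sequence `a` of a GLS IFS, with `s m = ε (a m)`,
`K m = (r (a m + 1) - r (a m))⁻¹` and `t m = r (a m) + ε (a m)`, the limit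
`x = lim_m h (a 0) ∘ ⋯ ∘ h (a (m-1)) (0)` is the sum of the series
`∑_m (-1)^(s 0 + ⋯ + s (m-1)) * t m / (K 0 ⋯ K (m-1))`. -/
theorem stmt6 (B : ℕ) (hB : 2 ≤ B) (r : ℕ → ℝ)
    (hr0 : r 0 = 0) (hrB : r B = 1)
    (hmono : ∀ k < B, r k < r (k + 1))
    (ε : ℕ → ℕ) (hε : ∀ k < B, ε k = 0 ∨ ε k = 1)
    (h : ℕ → ℝ → ℝ)
    (hh : ∀ k, h k = fun x => r k + ε k + (-1 : ℝ) ^ (ε k) * x * (r (k + 1) - r k))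
    (a : ℕ → ℕ) (ha : ∀ m, a m < B) (x : ℝ)
    (hx : Filter.Tendsto
      (fun m : ℕ => (List.ofFn fun i : Fin m => h (a i)).foldr (fun f y => f y) 0)
      Filter.atTop (nhds x)) :
    HasSum
      (fun m : ℕ => (-1 : ℝ) ^ (∑ i ∈ Finset.range m, ε (a i)) *
        ((r (a m) + ε (a m)) / ∏ i ∈ Finset.range m, (r (a i + 1) - r (a i))⁻¹))
      x := by
  -- key identity
  have key : ∀ (n j : ℕ), (List.ofFn fun i : Fin n => h (a (j + i))).foldr (fun f y => f y) 0
      = ∑ m ∈ Finset.range n, (-1:ℝ)^(∑ i ∈ Finset.range m, ε (a (j+i)))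
          * (r (a (j+m)) + ε (a (j+m)))
          * ∏ i ∈ Finset.range m, (r (a (j+i) + 1) - r (a (j+i))) := by
    intro n
    induction n with
    | zero => intro j; simp
    | succ n ih =>
      intro j
      have hidx : ∀ i : ℕ, j + (i + 1) = (j + 1) + i := fun i => by omega
      rw [List.ofFn_succ, List.foldr_cons]
      have hfun : (fun i : Fin n => h (a (j + ((i.succ : Fin (n+1)) : ℕ))))
          = fun i : Fin n => h (a ((j+1) + (i : ℕ))) := by
        funext i; rw [Fin.val_succ, hidx]
      rw [hfun, ih (j+1), hh, Finset.sum_range_succ']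
      simp only [Finset.sum_range_zero, Finset.range_zero, Finset.prod_empty, pow_zero,
        one_mul, mul_one, Nat.add_zero]
      have hterm : ∀ m, (-1:ℝ)^(∑ i ∈ Finset.range (m+1), ε (a (j+i)))
          * (r (a (j+(m+1))) + ε (a (j+(m+1))))
          * ∏ i ∈ Finset.range (m+1), (r (a (j+i) + 1) - r (a (j+i)))
          = ((-1:ℝ)^(ε (a j)) * (r (a j + 1) - r (a j))) *
            ((-1:ℝ)^(∑ i ∈ Finset.range m, ε (a ((j+1)+i)))
            * (r (a ((j+1)+m)) + ε (a ((j+1)+m)))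
            * ∏ i ∈ Finset.range m, (r (a ((j+1)+i) + 1) - r (a ((j+1)+i)))) := by
        intro m
        have e1 : (∑ i ∈ Finset.range m, ε (a (j+(i+1)))) = ∑ i ∈ Finset.range m, ε (a ((j+1)+i)) :=
          Finset.sum_congr rfl fun i _ => by rw [hidx]
        have e2 : (∏ i ∈ Finset.range m, (r (a (j+(i+1)) + 1) - r (a (j+(i+1)))))
            = ∏ i ∈ Finset.range m, (r (a ((j+1)+i) + 1) - r (a ((j+1)+i))) :=
          Finset.prod_congr rfl fun i _ => by rw [hidx]
        rw [Finset.sum_range_succ', Finset.prod_range_succ', e1, e2, hidx m, Nat.add_zero, pow_add]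
        simp only [Nat.add_zero]; ring
      simp only [hterm, ← Finset.mul_sum, Fin.val_zero, Nat.add_zero]
      ring
  -- abbreviations
  set g : ℕ → ℝ := fun m => (-1:ℝ)^(∑ i ∈ Finset.range m, ε (a i))
      * (r (a m) + ε (a m)) * ∏ i ∈ Finset.range m, (r (a i + 1) - r (a i)) with hg
  have hfg : (fun m : ℕ => (-1 : ℝ) ^ (∑ i ∈ Finset.range m, ε (a i)) *
      ((r (a m) + ε (a m)) / ∏ i ∈ Finset.range m, (r (a i + 1) - r (a i))⁻¹)) = g := by
    funext m
    rw [hg, Finset.prod_inv_distrib, div_eq_mul_inv, inv_inv, ← mul_assoc]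
  rw [hfg]
  have hΔpos : ∀ k < B, (0:ℝ) < r (k+1) - r k := fun k hk => sub_pos.2 (hmono k hk)
  have hΔsum : ∑ k ∈ Finset.range B, (r (k+1) - r k) = 1 := by
    rw [Finset.sum_range_sub, hr0, hrB, sub_zero]
  -- bounds on r
  have hrval : ∀ k, r k = ∑ i ∈ Finset.range k, (r (i+1) - r i) := by
    intro k; rw [Finset.sum_range_sub, hr0, sub_zero]
  have hrlb : ∀ k ≤ B, (0:ℝ) ≤ r k := by
    intro k hk; rw [hrval k]
    exact Finset.sum_nonneg fun i hi =>
      le_of_lt (hΔpos i (lt_of_lt_of_le (Finset.mem_range.1 hi) hk))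
  have hrub : ∀ k ≤ B, r k ≤ 1 := by
    intro k hk; rw [hrval k, ← hΔsum]
    exact Finset.sum_le_sum_of_subset_of_nonneg
      (Finset.range_subset_range.2 hk)
      (fun i hi _ => le_of_lt (hΔpos i (Finset.mem_range.1 hi)))
  -- the contraction factor
  have hne : (Finset.range B).Nonempty := ⟨0, Finset.mem_range.2 (by omega)⟩
  set c : ℝ := (Finset.range B).sup' hne (fun k => r (k+1) - r k) with hc
  have hcge : ∀ k < B, r (k+1) - r k ≤ c := fun k hk =>
    Finset.le_sup' (fun k => r (k+1) - r k) (Finset.mem_range.2 hk)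
  have hc0 : (0:ℝ) ≤ c := le_trans (le_of_lt (hΔpos 0 (by omega))) (hcge 0 (by omega))
  have hc1 : c < 1 := by
    rw [hc, Finset.sup'_lt_iff]
    intro k hk
    rw [← hΔsum]
    have hkB := Finset.mem_range.1 hk
    refine Finset.single_lt_sum (f := fun k => r (k+1) - r k) (i := k) (j := if k = 0 then 1 else 0) ?_ hk ?_ ?_ ?_
    · split <;> omega
    · refine Finset.mem_range.2 ?_; split <;> omega
    · refine hΔpos _ ?_; split <;> omega
    · exact fun i hi _ => le_of_lt (hΔpos i (Finset.mem_range.1 hi))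
  -- summability
  have hgabs : ∀ m, ‖g m‖ ≤ 2 * c^m := by
    intro m
    have htnn : (0:ℝ) ≤ r (a m) + ε (a m) :=
      add_nonneg (hrlb _ (le_of_lt (ha m))) (Nat.cast_nonneg _)
    have hpnn : (0:ℝ) ≤ ∏ i ∈ Finset.range m, (r (a i + 1) - r (a i)) :=
      Finset.prod_nonneg fun i _ => le_of_lt (hΔpos _ (ha i))
    have h1 : ‖g m‖ = (r (a m) + ε (a m)) * ∏ i ∈ Finset.range m, (r (a i + 1) - r (a i)) := by
      rw [hg]
      rw [Real.norm_eq_abs, abs_mul, abs_mul, abs_pow, abs_neg, abs_one, one_pow, one_mul,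
        abs_of_nonneg htnn, abs_of_nonneg hpnn]
    rw [h1]
    have h2 : r (a m) + (ε (a m):ℝ) ≤ 2 := by
      have h3 : (ε (a m):ℝ) ≤ 1 := by
        rcases hε (a m) (ha m) with h4 | h4 <;> rw [h4] <;> norm_num
      have := hrub (a m) (le_of_lt (ha m))
      linarith
    have h5 : ∏ i ∈ Finset.range m, (r (a i + 1) - r (a i)) ≤ c^m := by
      calc ∏ i ∈ Finset.range m, (r (a i + 1) - r (a i))
          ≤ ∏ i ∈ Finset.range m, c :=
            Finset.prod_le_prod (fun i _ => le_of_lt (hΔpos _ (ha i)))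
              (fun i _ => hcge _ (ha i))
        _ = c^m := by rw [Finset.prod_const, Finset.card_range]
    exact mul_le_mul h2 h5 hpnn (by norm_num)
  have hsummable : Summable g :=
    Summable.of_norm_bounded ((summable_geometric_of_lt_one hc0 hc1).mul_left 2) hgabs
  -- identify the limit
  have key0 : ∀ n : ℕ, (List.ofFn fun i : Fin n => h (a i)).foldr (fun f y => f y) 0
      = ∑ m ∈ Finset.range n, g m := by
    intro n
    have := key n 0
    simpa [Nat.zero_add, hg] using this
  have hx' : Filter.Tendsto (fun n : ℕ => (∑ m ∈ Finset.range n, g m))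
      Filter.atTop (nhds x) := hx.congr key0
  have hxx : x = (∑' m, g m) :=
    tendsto_nhds_unique hx' hsummable.hasSum.tendsto_sum_nat
  rw [hxx]
  exact hsummable.hasSum
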